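/- arXiv:1307.0966 — 8 statements merged into one kernel-verified Lean document; each statement's English description precedes it below -/
import Mathlib

section
/- The symmetric piecewise constant density g with g(x) = M₀ e^{-iε} on the band d + (i-1)Δ < |x| ≤ d + iΔ and g(x) = M₀ on [-d, d] satisfies the ε-differential privacy condition: for all x, y ∈ ℝ with |x - y| ≤ Δ, g(x) ≤ e^ε g(y). -/
open Real

theorem stmt_3 (ε Δ d M₀ : ℝ) (hε : 0 < ε) (hΔ : 0 < Δ)
    (hd : d ∈ Set.Icc 0 Δ) (hM : 0 < M₀)
    (hnorm : 2 * M₀ * (d + Δ * Real.exp (-ε) / (1 - Real.exp (-ε))) = 1)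
    (g : ℝ → ℝ)
    (hg0 : ∀ x : ℝ, |x| ≤ d → g x = M₀)
    (hgi : ∀ (i : ℕ) (x : ℝ), 1 ≤ i →
      d + ((i : ℝ) - 1) * Δ < |x| → |x| ≤ d + (i : ℝ) * Δ →
      g x = M₀ * Real.exp (-(i : ℝ) * ε)) :
    ∀ x y : ℝ, |x - y| ≤ Δ → g x ≤ Real.exp ε * g y := by
  have key : ∀ x : ℝ, g x = M₀ * Real.exp (-(⌈(|x| - d) / Δ⌉₊ : ℝ) * ε) := by
    intro x
    rcases le_or_gt |x| d with h | h
    · have h0 : ⌈(|x| - d) / Δ⌉₊ = 0 :=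
        Nat.ceil_eq_zero.mpr (div_nonpos_of_nonpos_of_nonneg (by linarith) hΔ.le)
      rw [hg0 x h, h0]
      simp
    · set a := (|x| - d) / Δ with ha_def
      have ha : 0 < a := div_pos (by linarith) hΔ
      set i := ⌈a⌉₊ with hi_def
      have hi1 : 1 ≤ i := Nat.ceil_pos.mpr ha
      have hub : |x| ≤ d + (i : ℝ) * Δ := by
        have := Nat.le_ceil a
        have : a * Δ ≤ (i : ℝ) * Δ := by
          apply mul_le_mul_of_nonneg_right this hΔ.le
        rw [ha_def, div_mul_cancel₀ _ hΔ.ne'] at this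
        linarith
      have hlb : d + ((i : ℝ) - 1) * Δ < |x| := by
        have hia : (i : ℝ) - 1 < a := by
          by_contra hc
          push_neg at hc
          have : (i : ℝ) - 1 = ((i - 1 : ℕ) : ℝ) := by
            rw [Nat.cast_sub hi1]; simp
          rw [this] at hc
          have := Nat.ceil_le.mpr hc
          omega
        have : ((i : ℝ) - 1) * Δ < a * Δ := mul_lt_mul_of_pos_right hia hΔ
        rw [ha_def, div_mul_cancel₀ _ hΔ.ne'] at this
        linarith
      exact hgi i x hi1 hlb hub
  intro x y hxy
  rw [key x, key y]
  set ix := ⌈(|x| - d) / Δ⌉₊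
  set iy := ⌈(|y| - d) / Δ⌉₊
  have hle : iy ≤ ix + 1 := by
    apply Nat.ceil_le.mpr
    have h1 : |y| ≤ |x| + Δ := by
      have := abs_sub_abs_le_abs_sub y x
      rw [abs_sub_comm] at this
      linarith
    have h2 : (|x| - d) / Δ ≤ (ix : ℝ) := Nat.le_ceil _
    have h3 : (|y| - d) / Δ ≤ (ix : ℝ) + 1 := by
      rw [div_le_iff₀ hΔ]
      rw [div_le_iff₀ hΔ] at h2
      nlinarith
    push_cast
    exact h3
  rw [show Real.exp ε * (M₀ * Real.exp (-(iy : ℝ) * ε)) =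
      M₀ * Real.exp (ε + -(iy : ℝ) * ε) by rw [Real.exp_add]; ring]
  apply mul_le_mul_of_nonneg_left _ hM.le
  apply Real.exp_le_exp.mpr
  have : (iy : ℝ) ≤ (ix : ℝ) + 1 := by exact_mod_cast hle
  nlinarith
end

section
/- Adding Laplace noise with mean 0 and scale Δ/ε achieves ε-differential privacy: if |a - b| ≤ Δ, then for the Laplace density p with scale Δ/ε and any measurable set S ⊆ ℝ, ∫_S p(x - a) dx ≤ e^ε ∫_S p(x - b) dx. -/
open MeasureTheory Real

lemma integrable_exp_neg_mul_abs' {c : ℝ} (hc : 0 < c) :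
    Integrable (fun x : ℝ => Real.exp (-c * |x|)) := by
  have h1 : IntegrableOn (fun x : ℝ => Real.exp (-c * |x|)) (Set.Ici 0) := by
    rw [integrableOn_Ici_iff_integrableOn_Ioi]
    apply (exp_neg_integrableOn_Ioi 0 hc).congr_fun ?_ measurableSet_Ioi
    intro x hx
    simp [abs_of_pos (Set.mem_Ioi.mp hx), neg_mul]
  have h2 : IntegrableOn (fun x : ℝ => Real.exp (-c * |x|)) (Set.Iic 0) := by
    have h_map_neg : (volume.restrict (Set.Ici (0:ℝ))).map Neg.neg
        = volume.restrict (Set.Iic 0) := by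
      conv => rhs; rw [← Measure.map_neg_eq_self (volume : Measure ℝ),
        measurableEmbedding_neg.restrict_map]
      simp
    rw [IntegrableOn, ← h_map_neg, measurableEmbedding_neg.integrable_map_iff]
    simpa [Function.comp_def, IntegrableOn] using h1
  rw [← integrableOn_univ, ← Set.Iic_union_Ici (a := (0:ℝ))]
  exact h2.union h1

theorem stmt_5 (ε Δ : ℝ) (hε : 0 < ε) (hΔ : 0 < Δ)
    (p : ℝ → ℝ) (hp : ∀ x, p x = ε / (2 * Δ) * Real.exp (-|x| * ε / Δ))
    (a b : ℝ) (hab : |a - b| ≤ Δ) :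
    ∀ S : Set ℝ, MeasurableSet S →
      (∫ x in S, p (x - a)) ≤ Real.exp ε * ∫ x in S, p (x - b) := by
  intro S hS
  have hc : (0:ℝ) < ε / Δ := div_pos hε hΔ
  have hInt : ∀ t : ℝ, Integrable (fun x => p (x - t)) := by
    intro t
    have := (((integrable_exp_neg_mul_abs' hc).const_mul
      (ε / (2 * Δ))).comp_sub_right t)
    apply this.congr
    filter_upwards with x
    rw [hp]
    ring_nf
  rw [← integral_const_mul]
  apply setIntegral_mono_on ((hInt a).integrableOn) (((hInt b).const_mul _).integrableOn) hS
  intro x _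
  rw [hp, hp]
  have h1 : |x - b| - |x - a| ≤ Δ := by
    calc |x - b| - |x - a| ≤ |(x - b) - (x - a)| := abs_sub_abs_le_abs_sub _ _
    _ = |a - b| := by rw [show (x - b) - (x - a) = a - b by ring]
    _ ≤ Δ := hab
  have key : -|x - a| * ε / Δ ≤ ε + -|x - b| * ε / Δ := by
    rw [div_le_iff₀ hΔ, add_mul, div_mul_cancel₀ _ hΔ.ne']
    nlinarith
  have hexp : Real.exp (-|x - a| * ε / Δ) ≤ Real.exp ε * Real.exp (-|x - b| * ε / Δ) := by
    rw [← Real.exp_add]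
    exact Real.exp_le_exp.mpr key
  have hcn : (0:ℝ) ≤ ε / (2 * Δ) := by positivity
  calc ε / (2 * Δ) * Real.exp (-|x - a| * ε / Δ)
      ≤ ε / (2 * Δ) * (Real.exp ε * Real.exp (-|x - b| * ε / Δ)) :=
        mul_le_mul_of_nonneg_left hexp hcn
    _ = Real.exp ε * (ε / (2 * Δ) * Real.exp (-|x - b| * ε / Δ)) := by ring
end

section
/- For ε = 1 and Δ = 1, the variance of the optimal piecewise constant noise distribution, minimized over the parameter d ∈ [0,1], is strictly less than 2, the variance of the Laplace(0,1) distribution. -/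
open MeasureTheory Real

theorem stmt_8 :
    sInf {v : ℝ | ∃ d ∈ Set.Icc (0 : ℝ) 1, v =
      2 * (1 / (2 * (d + Real.exp (-1) / (1 - Real.exp (-1))))) * (∫ x in (0:ℝ)..d, x ^ 2) +
      2 * (1 / (2 * (d + Real.exp (-1) / (1 - Real.exp (-1))))) * Real.exp (-1) *
        ∑' i : ℕ, Real.exp (-(i : ℝ)) * ∫ x in (d + (i : ℝ))..(d + (i : ℝ) + 1), x ^ 2} < 2 := by
  have hq1 : Real.exp (-1) < 1 := Real.exp_lt_one_iff.mpr (by norm_num)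
  have hq0 : (0:ℝ) < Real.exp (-1) := Real.exp_pos _
  set q : ℝ := Real.exp (-1) with hqdef
  have h1q : (0:ℝ) < 1 - q := by linarith
  have hnorm : ‖q‖ < 1 := by rw [Real.norm_eq_abs, abs_of_pos hq0]; exact hq1
  -- closed form of the series at d = 1/2
  have h2 := hasSum_choose_mul_geometric_of_norm_lt_one (𝕜 := ℝ) 2 hnorm
  have h1 := hasSum_choose_mul_geometric_of_norm_lt_one (𝕜 := ℝ) 1 hnorm
  have h0 := hasSum_choose_mul_geometric_of_norm_lt_one (𝕜 := ℝ) 0 hnorm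
  have key : HasSum
      (fun i : ℕ => Real.exp (-(i:ℝ)) * ∫ x in ((1:ℝ)/2 + (i:ℝ))..((1:ℝ)/2 + (i:ℝ) + 1), x ^ 2)
      (2 * (1/(1-q)^3) - 1/(1-q)^2 + (1/12) * (1/(1-q))) := by
    have H := ((h2.mul_left 2).sub h1).add (h0.mul_left (1/12))
    convert H using 2 with i
    · rfl
    · rw [_root_.integral_pow]
      rw [show (-(i:ℝ)) = (i:ℝ) * (-1) by ring, Real.exp_nat_mul, ← hqdef]
      rw [Nat.cast_choose_two]
      push_cast [Nat.choose_one_right, Nat.choose_zero_right]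
      ring
    · norm_num
  -- the candidate value at d = 1/2
  set v : ℝ := 2 * (1 / (2 * ((1:ℝ)/2 + q / (1 - q)))) * (1/24) +
      2 * (1 / (2 * ((1:ℝ)/2 + q / (1 - q)))) * q *
        (2 * (1/(1-q)^3) - 1/(1-q)^2 + (1/12) * (1/(1-q))) with hvdef
  have hmem : v ∈ {v : ℝ | ∃ d ∈ Set.Icc (0 : ℝ) 1, v =
      2 * (1 / (2 * (d + q / (1 - q)))) * (∫ x in (0:ℝ)..d, x ^ 2) +
      2 * (1 / (2 * (d + q / (1 - q)))) * q *
        ∑' i : ℕ, Real.exp (-(i : ℝ)) * ∫ x in (d + (i : ℝ))..(d + (i : ℝ) + 1), x ^ 2} := by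
    refine ⟨1/2, ⟨by norm_num, by norm_num⟩, ?_⟩
    rw [key.tsum_eq, _root_.integral_pow, hvdef]
    norm_num
  -- the set is bounded below by 0
  have hbdd : BddBelow {v : ℝ | ∃ d ∈ Set.Icc (0 : ℝ) 1, v =
      2 * (1 / (2 * (d + q / (1 - q)))) * (∫ x in (0:ℝ)..d, x ^ 2) +
      2 * (1 / (2 * (d + q / (1 - q)))) * q *
        ∑' i : ℕ, Real.exp (-(i : ℝ)) * ∫ x in (d + (i : ℝ))..(d + (i : ℝ) + 1), x ^ 2} := by
    refine ⟨0, ?_⟩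
    rintro w ⟨d, ⟨hd0, hd1⟩, rfl⟩
    have hc : (0:ℝ) ≤ 1 / (2 * (d + q / (1 - q))) := by
      have : 0 < q / (1 - q) := div_pos hq0 h1q
      positivity
    have hI0 : (0:ℝ) ≤ ∫ x in (0:ℝ)..d, x ^ 2 :=
      intervalIntegral.integral_nonneg hd0 (fun x _ => sq_nonneg x)
    have hT : (0:ℝ) ≤ ∑' i : ℕ, Real.exp (-(i : ℝ)) *
        ∫ x in (d + (i : ℝ))..(d + (i : ℝ) + 1), x ^ 2 := by
      refine tsum_nonneg fun i => ?_
      have : (0:ℝ) ≤ ∫ x in (d + (i : ℝ))..(d + (i : ℝ) + 1), x ^ 2 :=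
        intervalIntegral.integral_nonneg (by linarith) (fun x _ => sq_nonneg x)
      exact mul_nonneg (le_of_lt (Real.exp_pos _)) this
    have := Real.exp_pos (-1)
    nlinarith [mul_nonneg hc hI0, mul_nonneg (mul_nonneg hc hq0.le) hT]
  -- numeric bounds on q
  have he1 : (2.7182818283:ℝ) < Real.exp 1 := Real.exp_one_gt_d9
  have he2 : Real.exp 1 < 2.7182818286 := Real.exp_one_lt_d9
  have hqe : q = (Real.exp 1)⁻¹ := by rw [hqdef, ← Real.exp_neg]
  have hql : (0.3678:ℝ) < q := by
    rw [hqe]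
    rw [lt_inv_comm₀ (by norm_num) (Real.exp_pos 1)]
    calc Real.exp 1 < 2.7182818286 := he2
    _ < 0.3678⁻¹ := by norm_num
  have hqu : q < 0.3679 := by
    rw [hqe]
    rw [inv_lt_comm₀ (Real.exp_pos 1) (by norm_num)]
    calc (0.3679:ℝ)⁻¹ < 2.7182818283 := by norm_num
    _ < Real.exp 1 := he1
  -- v < 2
  have hv2 : v < 2 := by
    have h1q' : (1 - q) ≠ 0 := ne_of_gt h1q
    have h1qc : (0:ℝ) < 1 + q := by linarith
    have hhalf : ((1:ℝ)/2 + q / (1 - q)) ≠ 0 := by positivity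
    have hEq : v = (1 + 23*q + 23*q^2 + q^3) / (12 * (1 + q) * (1 - q)^2) := by
      rw [hvdef]
      field_simp
      ring
    rw [hEq, div_lt_iff₀ (by positivity)]
    nlinarith [sq_nonneg q, mul_pos hq0 hq0, mul_pos (mul_pos hq0 hq0) hq0,
      mul_nonneg (mul_nonneg hq0.le hq0.le) hq0.le, sq_nonneg (q - 0.3679)]
  exact lt_of_le_of_lt (csInf_le hbdd hmem) hv2
end

section
/- Sequential composition of differential privacy: if mechanism κ₁ provides ε₁-DP and, for each possible output of κ₁, mechanism κ₂ provides ε₂-DP, and κ₁ and κ₂ are independent given the data set, then the pair (κ₁, κ₂) provides (ε₁ + ε₂)-differential privacy. -/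
open MeasureTheory Real

theorem stmt_11 {Dt Ω₁ Ω₂ : Type*} [MeasurableSpace Ω₁] [MeasurableSpace Ω₂]
    (Neighbor : Dt → Dt → Prop) (ε₁ ε₂ : ℝ)
    (κ₁ : Dt → Measure Ω₁) (κ₂ : Dt → Measure Ω₂)
    (hκ₁ : ∀ x, IsProbabilityMeasure (κ₁ x)) (hκ₂ : ∀ x, IsProbabilityMeasure (κ₂ x))
    (h₁ : ∀ x y : Dt, Neighbor x y → ∀ S : Set Ω₁, MeasurableSet S →
      κ₁ x S ≤ ENNReal.ofReal (Real.exp ε₁) * κ₁ y S)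
    (h₂ : ∀ x y : Dt, Neighbor x y → ∀ S : Set Ω₂, MeasurableSet S →
      κ₂ x S ≤ ENNReal.ofReal (Real.exp ε₂) * κ₂ y S) :
    ∀ x y : Dt, Neighbor x y → ∀ S : Set (Ω₁ × Ω₂), MeasurableSet S →
      (κ₁ x).prod (κ₂ x) S ≤ ENNReal.ofReal (Real.exp (ε₁ + ε₂)) * (κ₁ y).prod (κ₂ y) S := by
  intro x y hxy S hS
  have hmle : κ₁ x ≤ ENNReal.ofReal (Real.exp ε₁) • κ₁ y :=
    Measure.le_intro fun s hs _ => by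
      simpa using h₁ x y hxy s hs
  calc (κ₁ x).prod (κ₂ x) S
      = ∫⁻ a, κ₂ x (Prod.mk a ⁻¹' S) ∂(κ₁ x) := Measure.prod_apply hS
    _ ≤ ∫⁻ a, ENNReal.ofReal (Real.exp ε₂) * κ₂ y (Prod.mk a ⁻¹' S) ∂(κ₁ x) :=
        lintegral_mono fun a => h₂ x y hxy _ (measurable_prodMk_left hS)
    _ ≤ ∫⁻ a, ENNReal.ofReal (Real.exp ε₂) * κ₂ y (Prod.mk a ⁻¹' S)
          ∂(ENNReal.ofReal (Real.exp ε₁) • κ₁ y) := lintegral_mono' hmle le_rfl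
    _ = ENNReal.ofReal (Real.exp ε₁) * (ENNReal.ofReal (Real.exp ε₂) *
          ∫⁻ a, κ₂ y (Prod.mk a ⁻¹' S) ∂(κ₁ y)) := by
        rw [lintegral_smul_measure, lintegral_const_mul' _ _ ENNReal.ofReal_ne_top, smul_eq_mul]
    _ = ENNReal.ofReal (Real.exp (ε₁ + ε₂)) * (κ₁ y).prod (κ₂ y) S := by
        rw [Measure.prod_apply hS, Real.exp_add,
          ENNReal.ofReal_mul (Real.exp_nonneg _), mul_assoc]
end

section
/- Knowledge refinement mechanism achieves differential privacy: let P be a probability measure (prior knowledge) on a measurable space, let α_u ≥ 1 and α_d ≤ 1 satisfy α_u = e^ε α_d, and suppose for every possible true answer a there is a measurable set U_a with α_u P(U_a) + α_d (1 - P(U_a)) = 1. Then the family of measures Q_a defined by Q_a(S) = α_u P(S ∩ U_a) + α_d P(S \ U_a) are probability measures satisfying Q_a(S) ≤ e^ε Q_b(S) for all answers a, b and all measurable S. -/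
open MeasureTheory Real

theorem stmt_12 {Ω A : Type*} [MeasurableSpace Ω]
    (ε : ℝ) (hε : 0 < ε)
    (P : Measure Ω) [IsProbabilityMeasure P]
    (αu αd : ℝ) (hαu : 1 ≤ αu) (hαd0 : 0 ≤ αd) (hαd : αd ≤ 1)
    (hrel : αu = Real.exp ε * αd)
    (U : A → Set Ω) (hU : ∀ a, MeasurableSet (U a))
    (hmass : ∀ a, αu * (P (U a)).toReal + αd * (1 - (P (U a)).toReal) = 1)
    (Q : A → Set Ω → ℝ)
    (hQ : ∀ a S, Q a S = αu * (P (S ∩ U a)).toReal + αd * (P (S \ U a)).toReal) :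
    (∀ a, Q a Set.univ = 1) ∧
    (∀ a S, 0 ≤ Q a S) ∧
    (∀ a b : A, ∀ S : Set Ω, MeasurableSet S → Q a S ≤ Real.exp ε * Q b S) := by
  have h0 : (0:ℝ) ≤ αu := le_trans zero_le_one hαu
  have hsplit : ∀ (a : A) (S : Set Ω),
      (P (S ∩ U a)).toReal + (P (S \ U a)).toReal = (P S).toReal := by
    intro a S
    rw [← ENNReal.toReal_add (measure_ne_top _ _) (measure_ne_top _ _),
      measure_inter_add_diff S (hU a)]
  have hdu : αd ≤ αu := by
    calc αd = 1 * αd := (one_mul αd).symm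
    _ ≤ Real.exp ε * αd := by
        exact mul_le_mul_of_nonneg_right (Real.one_le_exp hε.le) hαd0
    _ = αu := hrel.symm
  refine ⟨?_, ?_, ?_⟩
  · intro a
    rw [hQ]
    have h1 : Set.univ ∩ U a = U a := Set.univ_inter _
    have h2 : Set.univ \ U a = (U a)ᶜ := Set.compl_eq_univ_diff (U a) ▸ rfl
    rw [h1, h2]
    have h3 : (P (U a)ᶜ).toReal = 1 - (P (U a)).toReal := by
      rw [measure_compl (hU a) (measure_ne_top _ _), measure_univ,
        ENNReal.toReal_sub_of_le prob_le_one (by simp), ENNReal.toReal_one]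
    rw [h3]; exact hmass a
  · intro a S
    rw [hQ]
    positivity
  · intro a b S _
    rw [hQ, hQ]
    have key : αu * (P (S ∩ U a)).toReal + αd * (P (S \ U a)).toReal
        ≤ αu * (P S).toReal := by
      rw [← hsplit a S, mul_add]
      have := mul_le_mul_of_nonneg_right hdu (ENNReal.toReal_nonneg (a := P (S \ U a)))
      linarith
    have key2 : αu * (P S).toReal
        ≤ Real.exp ε * (αu * (P (S ∩ U b)).toReal + αd * (P (S \ U b)).toReal) := by
      rw [← hsplit b S]
      have h1 : αd * (P (S ∩ U b)).toReal ≤ αu * (P (S ∩ U b)).toReal :=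
        mul_le_mul_of_nonneg_right hdu ENNReal.toReal_nonneg
      nlinarith [Real.exp_pos ε, ENNReal.toReal_nonneg (a := P (S ∩ U b)),
        ENNReal.toReal_nonneg (a := P (S \ U b))]
    linarith
end

section
/- Consider a microaggregation that, given a totally ordered finite multiset X of size n, repeatedly removes the k smallest elements as a cluster while at least 2k elements remain (the remainder forming the last cluster). If X' is obtained from X by replacing one element, then there is a bijection between the clusters of X and the clusters of X' such that corresponding clusters differ in at most one element. -/
/-- Order-based microaggregation on a sorted list: repeatedly remove the first
`k` elements as a cluster while at least `2*k` elements remain; the remaining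
elements form the last cluster. -/
def clustersMA {α : Type*} (k : ℕ) (l : List α) : List (List α) :=
  if h : 2 * k ≤ l.length ∧ 0 < k then
    l.take k :: clustersMA k (l.drop k)
  else [l]
termination_by l.length
decreasing_by
  simp only [List.length_drop]
  omega

section MAHelper

variable {α : Type*}

lemma clustersMA_ne_nil (k : ℕ) (l : List α) : clustersMA k l ≠ [] := by
  rw [clustersMA]
  split <;> simp

lemma clustersMA_cons (k : ℕ) (l : List α) (h : 2 * k ≤ l.length ∧ 0 < k) :
    clustersMA k l = l.take k :: clustersMA k (l.drop k) := by
  rw [clustersMA, dif_pos h]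

lemma clustersMA_single (k : ℕ) (l : List α) (h : ¬(2 * k ≤ l.length ∧ 0 < k)) :
    clustersMA k l = [l] := by
  rw [clustersMA, dif_neg h]

lemma clustersMA_length_eq {β : Type*} (k : ℕ) (n : ℕ) :
    ∀ (l : List α) (l2 : List β), l.length = n → l2.length = n →
      (clustersMA k l).length = (clustersMA k l2).length := by
  induction n using Nat.strong_induction_on with
  | _ n ih =>
    intro l l2 hl hl2
    by_cases h : 2 * k ≤ n ∧ 0 < k
    · rw [clustersMA_cons k l (by rw [hl]; exact h),
        clustersMA_cons k l2 (by rw [hl2]; exact h)]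
      simp only [List.length_cons]
      rw [ih (n - k) (by omega) (l.drop k) (l2.drop k) (by simp [hl]) (by simp [hl2])]
    · rw [clustersMA_single k l (by rw [hl]; exact h),
        clustersMA_single k l2 (by rw [hl2]; exact h)]
      simp

lemma clusters_seg (k : ℕ) :
    ∀ (i : ℕ) (l : List α), i < (clustersMA k l).length →
      ((l.take (k * i) : List α) : Multiset α)
          + (((clustersMA k l).getD i [] : List α) : Multiset α)
        = if i + 1 = (clustersMA k l).length then (l : Multiset α)
          else ((l.take (k * i + k) : List α) : Multiset α) := by
  intro i
  induction i with
  | zero =>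
    intro l _
    by_cases h : 2 * k ≤ l.length ∧ 0 < k
    · rw [clustersMA_cons k l h]
      have hlen : 0 < (clustersMA k (l.drop k)).length :=
        List.length_pos_iff.mpr (clustersMA_ne_nil _ _)
      rw [if_neg (by simp only [List.length_cons]; omega)]
      simp
    · rw [clustersMA_single k l h]
      simp
  | succ i ih =>
    intro l hi
    have h : 2 * k ≤ l.length ∧ 0 < k := by
      by_contra h
      rw [clustersMA_single k l h] at hi
      simp at hi
    rw [clustersMA_cons k l h] at hi ⊢
    simp only [List.length_cons, List.getD_cons_succ] at hi ⊢
    have hi' : i < (clustersMA k (l.drop k)).length := by omega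
    have hih := ih (l.drop k) hi'
    have hsplit : ∀ m : ℕ, ((l.take (k + m) : List α) : Multiset α)
        = ((l.take k : List α) : Multiset α) + (((l.drop k).take m : List α) : Multiset α) := by
      intro m
      rw [List.take_add, ← Multiset.coe_add]
    have h1 : k * (i + 1) = k + k * i := by ring
    rw [h1, hsplit (k * i), add_assoc, hih]
    by_cases hlast : i + 1 = (clustersMA k (l.drop k)).length
    · rw [if_pos hlast, if_pos (by omega), Multiset.coe_add, List.take_append_drop]
    · rw [if_neg hlast, if_neg (by omega),
        show k + k * i + k = k + (k * i + k) from by omega, hsplit (k * i + k)]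

lemma prefix_insert [LinearOrder α] (X : Multiset α) (a b : α) (ha : a ∈ X) (hab : a ≤ b) :
    ∀ t : ℕ, ∃ c : α,
      ((((X.erase a + {b}).sort (· ≤ ·)).take t : List α) : Multiset α) + {a}
        = (((X.sort (· ≤ ·)).take t : List α) : Multiset α) + {c} := by
  classical
  set l := X.sort (· ≤ ·) with hldef
  have hsort : l.Pairwise (· ≤ ·) := X.pairwise_sort _
  have hal : a ∈ l := by
    rw [hldef, Multiset.mem_sort]
    exact ha
  set u := l.takeWhile (fun x => decide (x < a)) with hu
  set r := l.dropWhile (fun x => decide (x < a)) with hr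
  have hur : u ++ r = l := List.takeWhile_append_dropWhile
  have hmemu : ∀ x ∈ u, x < a := fun x hx => by simpa using List.mem_takeWhile_imp hx
  have hanu : a ∉ u := fun h => lt_irrefl a (hmemu a h)
  have har : a ∈ r := by
    rcases List.mem_append.mp (hur ▸ hal) with h | h
    · exact absurd h hanu
    · exact h
  have hrne : r ≠ [] := fun h => by simp [h] at har
  have hrsort : r.Pairwise (· ≤ ·) := List.Pairwise.sublist (List.dropWhile_sublist _) hsort
  have hhead : r.head hrne = a := by
    have h1 : ¬(r.head hrne < a) := by
      have := List.head_dropWhile_not (fun x => decide (x < a)) hrne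
      simpa using this
    have h2 : r.head hrne ≤ a := by
      have hc : r.head hrne :: r.tail = r := List.cons_head_tail hrne
      rw [← hc] at har hrsort
      rcases List.mem_cons.mp har with h | h
      · exact le_of_eq h.symm
      · exact List.rel_of_pairwise_cons hrsort h
    exact le_antisymm h2 (not_lt.mp h1)
  set t0 := r.tail with ht0
  have hrc : r = a :: t0 := by
    rw [← hhead]
    exact (List.cons_head_tail hrne).symm
  have ht0sort : t0.Pairwise (· ≤ ·) := by
    rw [hrc] at hrsort
    exact hrsort.of_cons
  have hat0 : ∀ x ∈ t0, a ≤ x := by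
    rw [hrc] at hrsort
    exact fun x hx => List.rel_of_pairwise_cons hrsort hx
  set v := t0.takeWhile (fun x => decide (x ≤ b)) with hv
  set w := t0.dropWhile (fun x => decide (x ≤ b)) with hw
  have hvw : v ++ w = t0 := List.takeWhile_append_dropWhile
  have hmemv : ∀ x ∈ v, x ≤ b := fun x hx => by simpa using List.mem_takeWhile_imp hx
  have hvt0 : ∀ x ∈ v, a ≤ x := fun x hx => hat0 x ((List.takeWhile_sublist _).subset hx)
  have hwt0 : ∀ x ∈ w, a ≤ x := fun x hx => hat0 x ((List.dropWhile_sublist _).subset hx)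
  have hwsort : w.Pairwise (· ≤ ·) := List.Pairwise.sublist (List.dropWhile_sublist _) ht0sort
  have hmemw : ∀ x ∈ w, b < x := by
    intro x hx
    have hwne : w ≠ [] := List.ne_nil_of_mem hx
    have hhw : ¬(w.head hwne ≤ b) := by
      have := List.head_dropWhile_not (fun x => decide (x ≤ b)) hwne
      simpa using this
    have hle : w.head hwne ≤ x := by
      have hc : w.head hwne :: w.tail = w := List.cons_head_tail hwne
      rw [← hc] at hx hwsort
      rcases List.mem_cons.mp hx with h | h
      · exact le_of_eq h.symm
      · exact List.rel_of_pairwise_cons hwsort h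
    exact lt_of_lt_of_le (not_le.mp hhw) hle
  have husort : u.Pairwise (· ≤ ·) := List.Pairwise.sublist (List.takeWhile_sublist _) hsort
  have hvsort : v.Pairwise (· ≤ ·) := List.Pairwise.sublist (List.takeWhile_sublist _) ht0sort
  have hl2sort : (u ++ (v ++ b :: w)).Pairwise (· ≤ ·) := by
    rw [List.pairwise_append]
    refine ⟨husort, ?_, ?_⟩
    · rw [List.pairwise_append]
      refine ⟨hvsort, ?_, ?_⟩
      · rw [List.pairwise_cons]
        exact ⟨fun x hx => (hmemw x hx).le, hwsort⟩
      · intro x hx y hy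
        rcases List.mem_cons.mp hy with rfl | hy
        · exact hmemv x hx
        · exact (hmemv x hx).trans (hmemw y hy).le
    · intro x hx y hy
      have hxa : x < a := hmemu x hx
      rcases List.mem_append.mp hy with hy | hy
      · exact hxa.le.trans (hvt0 y hy)
      · rcases List.mem_cons.mp hy with rfl | hy
        · exact hxa.le.trans hab
        · exact hxa.le.trans (hwt0 y hy)
  have hlu : l = u ++ (a :: (v ++ w)) := by
    rw [← hur, hrc, hvw]
  have hco : ((u ++ (v ++ b :: w) : List α) : Multiset α) = X.erase a + {b} := by
    have hXl : (l : Multiset α) = X := Multiset.sort_eq _ _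
    have he : l.erase a = u ++ (v ++ w) := by
      rw [← hur, hrc, List.erase_append_right _ hanu, List.erase_cons_head, hvw]
    have hperm : (u ++ (v ++ b :: w)).Perm (l.erase a ++ [b]) := by
      rw [he, List.append_assoc]
      exact List.Perm.append_left u
        (List.perm_middle.trans (List.perm_append_singleton b (v ++ w)).symm)
    have h1 : ((u ++ (v ++ b :: w) : List α) : Multiset α)
        = ((l.erase a ++ [b] : List α) : Multiset α) := Multiset.coe_eq_coe.mpr hperm
    rw [h1, ← Multiset.coe_add, ← Multiset.coe_erase, hXl, Multiset.coe_singleton]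
  have hsorteq : (X.erase a + {b}).sort (· ≤ ·) = u ++ (v ++ b :: w) := by
    refine List.Perm.eq_of_pairwise' (Multiset.pairwise_sort _ _) hl2sort
      (Multiset.coe_eq_coe.mp ?_)
    rw [Multiset.sort_eq, hco]
  have key : ∀ j : ℕ, ∃ c : α,
      ((v.take j : List α) : Multiset α)
          + (((b :: w).take (j - v.length) : List α) : Multiset α) + {a}
        = (((a :: (v ++ w)).take j : List α) : Multiset α) + {c} := by
    intro j
    cases j with
    | zero => exact ⟨a, by simp⟩
    | succ j' =>
      rw [List.take_succ_cons]
      by_cases hj : j' < v.length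
      · refine ⟨v[j']'hj, ?_⟩
        have e2 : (v ++ w).take j' = v.take j' := by
          rw [List.take_append, show j' - v.length = 0 by omega]
          simp
        rw [show j' + 1 - v.length = 0 by omega, List.take_zero, e2,
          ← List.take_concat_get' v j' hj]
        simp only [← Multiset.coe_add, ← Multiset.cons_coe, ← Multiset.singleton_add,
          Multiset.coe_nil, add_zero, zero_add]
        simp only [add_comm, add_left_comm, add_assoc]
      · refine ⟨b, ?_⟩
        have hm : v.length ≤ j' := le_of_not_gt hj
        have e2 : (v ++ w).take j' = v ++ w.take (j' - v.length) := by
          rw [List.take_append, List.take_of_length_le hm]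
        rw [List.take_of_length_le (l := v) (by omega),
          show j' + 1 - v.length = (j' - v.length) + 1 by omega, List.take_succ_cons, e2]
        simp only [← Multiset.coe_add, ← Multiset.cons_coe, ← Multiset.singleton_add,
          Multiset.coe_nil, add_zero, zero_add]
        simp only [add_comm, add_left_comm, add_assoc]
  intro t
  obtain ⟨c, hc⟩ := key (t - u.length)
  refine ⟨c, ?_⟩
  have eL : (u ++ (v ++ b :: w)).take t
      = u.take t ++ (v.take (t - u.length)
          ++ (b :: w).take (t - u.length - v.length)) := by
    rw [List.take_append, List.take_append]
  have eR : (u ++ (a :: (v ++ w))).take t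
      = u.take t ++ (a :: (v ++ w)).take (t - u.length) :=
    List.take_append
  rw [hsorteq, hlu, eL, eR]
  have h2 := congrArg (fun M => ((u.take t : List α) : Multiset α) + M) hc
  simp only [← Multiset.coe_add] at h2 ⊢
  simp only [add_comm, add_left_comm, add_assoc] at h2 ⊢
  exact h2

lemma symdiff_card_le [DecidableEq α] (C C' : Multiset α) (x y : α)
    (h : C' + {x} = C + {y}) :
    Multiset.card ((C - C') + (C' - C)) ≤ 2 := by
  have h1 : C - C' ≤ {x} := by
    rw [tsub_le_iff_right, add_comm, h]
    exact Multiset.le_add_right C {y}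
  have h2 : C' - C ≤ {y} := by
    rw [tsub_le_iff_right, add_comm, ← h]
    exact Multiset.le_add_right C' {x}
  have c1 := Multiset.card_le_card h1
  have c2 := Multiset.card_le_card h2
  rw [Multiset.card_singleton] at c1 c2
  rw [Multiset.card_add]
  omega

lemma cluster_exchange [LinearOrder α] (k : ℕ) (X : Multiset α) (a b : α)
    (ha : a ∈ X) (hab : a ≤ b) (i : ℕ)
    (hi : i < (clustersMA k (X.sort (· ≤ ·))).length)
    (hi' : i < (clustersMA k ((X.erase a + {b}).sort (· ≤ ·))).length) :
    ∃ x y : α,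
      (((clustersMA k ((X.erase a + {b}).sort (· ≤ ·))).getD i [] : List α) : Multiset α) + {x}
        = (((clustersMA k (X.sort (· ≤ ·))).getD i [] : List α) : Multiset α) + {y} := by
  set l := X.sort (· ≤ ·) with hldef
  set l' := (X.erase a + {b}).sort (· ≤ ·) with hl'def
  have hlen : l'.length = l.length := by
    rw [hldef, hl'def, Multiset.length_sort, Multiset.length_sort, Multiset.card_add,
      Multiset.card_erase_of_mem ha, Multiset.card_singleton, Nat.pred_eq_sub_one]
    have hpos : 0 < Multiset.card X := Multiset.card_pos.mpr (by
      intro h0; rw [h0] at ha; simp at ha)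
    omega
  have hclen : (clustersMA k l').length = (clustersMA k l).length :=
    clustersMA_length_eq k l.length l' l hlen rfl
  have hseg := clusters_seg k i l hi
  have hseg' := clusters_seg k i l' hi'
  obtain ⟨cs, hcs⟩ := prefix_insert X a b ha hab (k * i)
  obtain ⟨T, T', ct, hT, hT', hct⟩ :
      ∃ (T T' : Multiset α) (ct : α),
        ((l.take (k * i) : List α) : Multiset α)
            + (((clustersMA k l).getD i [] : List α) : Multiset α) = T
        ∧ ((l'.take (k * i) : List α) : Multiset α)
            + (((clustersMA k l').getD i [] : List α) : Multiset α) = T'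
        ∧ T' + {a} = T + {ct} := by
    by_cases hlast : i + 1 = (clustersMA k l).length
    · obtain ⟨ct, hct⟩ := prefix_insert X a b ha hab l.length
      refine ⟨(l : Multiset α), (l' : Multiset α), ct, ?_, ?_, ?_⟩
      · rw [hseg, if_pos hlast]
      · rw [hseg', if_pos (by rw [hclen]; exact hlast)]
      · rwa [List.take_of_length_le (le_of_eq hlen), List.take_of_length_le le_rfl] at hct
    · obtain ⟨ct, hct⟩ := prefix_insert X a b ha hab (k * i + k)
      refine ⟨_, _, ct, ?_, ?_, hct⟩
      · rw [hseg, if_neg hlast]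
      · rw [hseg', if_neg (by rw [hclen]; exact hlast)]
  refine ⟨cs, ct, ?_⟩
  have key : ((((clustersMA k l').getD i [] : List α) : Multiset α) + {cs})
        + (((l.take (k * i) : List α) : Multiset α) + {a})
      = ((((clustersMA k l).getD i [] : List α) : Multiset α) + {ct})
        + (((l.take (k * i) : List α) : Multiset α) + {a}) := by
    calc (((clustersMA k l').getD i [] : List α) : Multiset α) + {cs}
          + (((l.take (k * i) : List α) : Multiset α) + {a})
        = (((clustersMA k l').getD i [] : List α) : Multiset α)
            + ((((l.take (k * i) : List α) : Multiset α) + {cs}) + {a}) := by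
          simp only [add_comm, add_left_comm, add_assoc]
      _ = (((clustersMA k l').getD i [] : List α) : Multiset α)
            + ((((l'.take (k * i) : List α) : Multiset α) + {a}) + {a}) := by rw [← hcs]
      _ = (((l'.take (k * i) : List α) : Multiset α)
            + (((clustersMA k l').getD i [] : List α) : Multiset α)) + ({a} + {a}) := by
          simp only [add_comm, add_left_comm, add_assoc]
      _ = (T' + {a}) + {a} := by rw [hT', add_assoc]
      _ = (T + {ct}) + {a} := by rw [hct]
      _ = ((((l.take (k * i) : List α) : Multiset α)
            + (((clustersMA k l).getD i [] : List α) : Multiset α)) + {ct}) + {a} := by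
          rw [hT]
      _ = (((clustersMA k l).getD i [] : List α) : Multiset α) + {ct}
            + (((l.take (k * i) : List α) : Multiset α) + {a}) := by
          simp only [add_comm, add_left_comm, add_assoc]
  exact add_right_cancel key

end MAHelper

theorem stmt_17 {α : Type*} [LinearOrder α]
    (k n : ℕ) (hk : 1 ≤ k) (hn : k ≤ n)
    (X X' : Multiset α) (hX : Multiset.card X = n)
    (a b : α) (ha : a ∈ X) (hX' : X' = X.erase a + {b}) :
    ∃ σ : Fin (clustersMA k (X.sort (· ≤ ·))).length ≃
          Fin (clustersMA k (X'.sort (· ≤ ·))).length,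
      ∀ i : Fin (clustersMA k (X.sort (· ≤ ·))).length,
        Multiset.card
          ((((clustersMA k (X.sort (· ≤ ·))).get i : Multiset α) -
              ((clustersMA k (X'.sort (· ≤ ·))).get (σ i) : Multiset α)) +
            (((clustersMA k (X'.sort (· ≤ ·))).get (σ i) : Multiset α) -
              ((clustersMA k (X.sort (· ≤ ·))).get i : Multiset α))) ≤ 2 := by
  subst hX'
  have hpos : 0 < Multiset.card X := Multiset.card_pos.mpr (by
    intro h0; rw [h0] at ha; simp at ha)
  have hcard : Multiset.card (X.erase a + {b}) = Multiset.card X := by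
    rw [Multiset.card_add, Multiset.card_erase_of_mem ha, Multiset.card_singleton,
      Nat.pred_eq_sub_one]
    omega
  have hclen : (clustersMA k (X.sort (· ≤ ·))).length
      = (clustersMA k ((X.erase a + {b}).sort (· ≤ ·))).length :=
    clustersMA_length_eq k (X.sort (· ≤ ·)).length _ _ rfl
      (by rw [Multiset.length_sort, Multiset.length_sort, hcard])
  refine ⟨finCongr hclen, ?_⟩
  intro i
  have hi : i.1 < (clustersMA k (X.sort (· ≤ ·))).length := i.isLt
  have hi' : i.1 < (clustersMA k ((X.erase a + {b}).sort (· ≤ ·))).length := hclen ▸ i.isLt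
  have hg1 : (clustersMA k (X.sort (· ≤ ·))).get i
      = (clustersMA k (X.sort (· ≤ ·))).getD i.1 [] := by
    rw [List.getD_eq_getElem _ _ hi, List.get_eq_getElem]
  have hg2 : (clustersMA k ((X.erase a + {b}).sort (· ≤ ·))).get (finCongr hclen i)
      = (clustersMA k ((X.erase a + {b}).sort (· ≤ ·))).getD i.1 [] := by
    rw [List.getD_eq_getElem _ _ hi', List.get_eq_getElem]
    simp [finCongr]
  rw [hg1, hg2]
  rcases le_total a b with hab | hab
  · obtain ⟨x, y, hxy⟩ := cluster_exchange k X a b ha hab i.1 hi hi'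
    exact symdiff_card_le _ _ _ _ hxy
  · have hb : b ∈ X.erase a + {b} := by simp
    have hXX : (X.erase a + {b}).erase b + {a} = X := by
      have h1 : (X.erase a + {b}).erase b = X.erase a := by
        rw [add_comm, Multiset.singleton_add, Multiset.erase_cons_head]
      rw [h1, add_comm, Multiset.singleton_add, Multiset.cons_erase ha]
    obtain ⟨x, y, hxy⟩ := cluster_exchange k (X.erase a + {b}) b a hb hab i.1 hi'
      (by rw [hXX]; exact hi)
    rw [hXX] at hxy
    have := symdiff_card_le _ _ _ _ hxy
    rwa [add_comm] at this
end

section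
/- Let M be an insensitive microaggregation on numerical data with minimal cluster size k computing each centroid as the arithmetic mean of its cluster, over a domain where each record's attribute values lie in a bounded range. If I_r is the query returning the attribute values of record r (with L₁-sensitivity Δ(I_r) equal to the range size), then the composed query I_r ∘ M has L₁-sensitivity at most Δ(I_r)/k. -/
open Finset

theorem stmt_18 (m N k : ℕ) (hk : 0 < k) (hkN : k ≤ N)
    (lo hi : Fin m → ℝ)
    (C C' : Fin N → Fin m → ℝ)
    (hC : ∀ i j, C i j ∈ Set.Icc (lo j) (hi j))
    (hC' : ∀ i j, C' i j ∈ Set.Icc (lo j) (hi j))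
    (hdiff : ∃ i₀ : Fin N, ∀ i : Fin N, i ≠ i₀ → C i = C' i) :
    ∑ j, |(∑ i, C i j) / (N : ℝ) - (∑ i, C' i j) / (N : ℝ)| ≤
      (∑ j, (hi j - lo j)) / (k : ℝ) := by
  obtain ⟨i₀, h⟩ := hdiff
  have hN : (0 : ℝ) < N := by exact_mod_cast lt_of_lt_of_le hk hkN
  have hkpos : (0 : ℝ) < k := by exact_mod_cast hk
  have hkN' : (k : ℝ) ≤ N := by exact_mod_cast hkN
  have key : ∀ j, (∑ i, C i j) - (∑ i, C' i j) = C i₀ j - C' i₀ j := by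
    intro j
    rw [← Finset.sum_sub_distrib]
    exact Finset.sum_eq_single i₀ (fun i _ hi => by rw [h i hi, sub_self])
      (fun hi => absurd (Finset.mem_univ i₀) hi)
  rw [Finset.sum_div]
  apply Finset.sum_le_sum
  intro j _
  rw [div_sub_div_same, key j]
  have h1 := hC i₀ j
  have h2 := hC' i₀ j
  simp only [Set.mem_Icc] at h1 h2
  have habs : |C i₀ j - C' i₀ j| ≤ hi j - lo j := by
    rw [abs_sub_le_iff]; constructor <;> linarith
  rw [abs_div, abs_of_pos hN]
  calc |C i₀ j - C' i₀ j| / N ≤ (hi j - lo j) / N :=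
        by gcongr
    _ ≤ (hi j - lo j) / k := by
        apply div_le_div_of_nonneg_left (by linarith [abs_nonneg (C i₀ j - C' i₀ j)]) hkpos hkN'
end

section
/- For a bivariate query with difference set S_f = [-s₁, s₁] × [-s₂, s₂], define sets S₀ = [-z₁,z₁] × [-z₂,z₂] ⊆ S_f and S_{i+1} = (S_i + S_f) \ ∪_{j≤i} S_j, and the density g(x) = M e^{-iε} for x ∈ S_i (M normalizing). Then for any x ∈ ℝ² and any δ ∈ S_f, if x ∈ S_i then x + δ ∈ S_{i-1} ∪ S_i ∪ S_{i+1}, and consequently g(x) ≤ e^ε g(x + δ). -/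
open Real Pointwise

theorem stmt_19 (ε s₁ s₂ z₁ z₂ M : ℝ) (hε : 0 < ε) (hM : 0 < M)
    (hz₁ : 0 < z₁) (hz₁s : z₁ ≤ s₁) (hz₂ : 0 < z₂) (hz₂s : z₂ ≤ s₂)
    (S : ℕ → Set (ℝ × ℝ))
    (hS0 : S 0 = Set.Icc (-z₁) z₁ ×ˢ Set.Icc (-z₂) z₂)
    (hSrec : ∀ i : ℕ, S (i + 1) =
      (S i + Set.Icc (-s₁) s₁ ×ˢ Set.Icc (-s₂) s₂) \ ⋃ j ∈ Finset.range (i + 1), S j)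
    (g : ℝ × ℝ → ℝ)
    (hg : ∀ (i : ℕ) (x : ℝ × ℝ), x ∈ S i → g x = M * Real.exp (-(i : ℝ) * ε)) :
    ∀ (x δ : ℝ × ℝ), δ ∈ Set.Icc (-s₁) s₁ ×ˢ Set.Icc (-s₂) s₂ →
      ∀ i : ℕ, x ∈ S i →
        x + δ ∈ S (i - 1) ∪ S i ∪ S (i + 1) ∧ g x ≤ Real.exp ε * g (x + δ) := by
  intro x δ hδ i hx
  have hdisj : ∀ j k : ℕ, j < k → ∀ y, y ∈ S j → y ∉ S k := by
    intro j k hjk y hyj hyk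
    obtain ⟨m, rfl⟩ : ∃ m, k = m + 1 := ⟨k - 1, by omega⟩
    rw [hSrec] at hyk
    exact hyk.2 (Set.mem_iUnion₂.mpr ⟨j, Finset.mem_range.mpr (by omega), hyj⟩)
  have hadd : ∀ (k : ℕ) (y d : ℝ × ℝ), y ∈ S k →
      d ∈ Set.Icc (-s₁) s₁ ×ˢ Set.Icc (-s₂) s₂ → ∃ j ≤ k + 1, y + d ∈ S j := by
    intro k y d hy hd
    by_cases h : y + d ∈ ⋃ j ∈ Finset.range (k + 1), S j
    · obtain ⟨j, hj, hmem⟩ := Set.mem_iUnion₂.mp h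
      exact ⟨j, (Nat.le_of_lt_succ (Finset.mem_range.mp hj)).trans (Nat.le_succ k), hmem⟩
    · refine ⟨k + 1, le_refl _, ?_⟩
      rw [hSrec]
      exact ⟨Set.add_mem_add hy hd, h⟩
  have hδ' : -δ ∈ Set.Icc (-s₁) s₁ ×ˢ Set.Icc (-s₂) s₂ := by
    obtain ⟨⟨h1, h2⟩, h3, h4⟩ := hδ
    exact ⟨⟨by simpa using neg_le_neg h2, by simpa using neg_le_neg h1⟩,
      ⟨by simpa using neg_le_neg h4, by simpa using neg_le_neg h3⟩⟩
  obtain ⟨j, hj, hmem⟩ := hadd i x δ hx hδ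
  have hji : i ≤ j + 1 := by
    by_contra h
    push_neg at h
    obtain ⟨k, hk, hkm⟩ := hadd j (x + δ) (-δ) hmem hδ'
    have hxk : x ∈ S k := by simpa using hkm
    exact hdisj k i (by omega) x hxk hx
  refine ⟨?_, ?_⟩
  · have : j = i - 1 ∨ j = i ∨ j = i + 1 := by omega
    rcases this with h | h | h
    · exact Or.inl (Or.inl (h ▸ hmem))
    · exact Or.inl (Or.inr (h ▸ hmem))
    · exact Or.inr (h ▸ hmem)
  · rw [hg i x hx, hg j _ hmem]
    have hcast : (j : ℝ) ≤ (i : ℝ) + 1 := by exact_mod_cast hj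
    calc M * Real.exp (-(i : ℝ) * ε)
        ≤ M * Real.exp (ε + -(j : ℝ) * ε) := by
          apply mul_le_mul_of_nonneg_left (Real.exp_le_exp.mpr (by nlinarith)) hM.le
      _ = Real.exp ε * (M * Real.exp (-(j : ℝ) * ε)) := by
          rw [Real.exp_add]; ring
end
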